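/- Define polynomials q_α ∈ ℚ[X] recursively by q_0(X) = 1 and q_{α+1}(X) = (2X+1)²·q_α(X) − 4X²·q_α(X−1). Then for every α ≥ 0, q_α is a polynomial of degree exactly α whose leading coefficient equals α!·2^{2α}. -/
import Mathlib


open Polynomial

/-- The polynomials `q_α` defined by `q_0(X) = 1` and
`q_{α+1}(X) = (2X+1)²·q_α(X) − 4X²·q_α(X−1)`. -/
noncomputable def qPoly : ℕ → Polynomial ℚ
  | 0 => 1
  | α + 1 => (2 * X + 1) ^ 2 * qPoly α - 4 * X ^ 2 * (qPoly α).comp (X - 1)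

lemma coeff_taylor_neg_one (q : Polynomial ℚ) (k : ℕ) (h : q.natDegree ≤ k + 1) :
    (taylor (-1) q).coeff k = q.coeff k - (k + 1) * q.coeff (k + 1) := by
  rw [taylor_coeff]
  have hlt : (Polynomial.hasseDeriv k q).natDegree < 2 := by
    have := Polynomial.natDegree_hasseDeriv_le q k
    omega
  rw [Polynomial.eval_eq_sum_range' hlt]
  simp [Finset.sum_range_succ, Polynomial.hasseDeriv_coeff]
  rw [Nat.add_comm 1 k, Nat.choose_succ_self_right]
  push_cast
  ring

lemma comp_eq_taylor (q : Polynomial ℚ) : q.comp (X - 1) = taylor (-1) q := by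
  rw [taylor_apply, map_neg, C_1, ← sub_eq_add_neg]

lemma qPoly_aux (α : ℕ) :
    (qPoly α).coeff α = (α.factorial : ℚ) * 2 ^ (2 * α) ∧
    ∀ m, α < m → (qPoly α).coeff m = 0 := by
  induction α with
  | zero =>
    constructor
    · simp [qPoly]
    · intro m hm
      simp only [qPoly, coeff_one]
      rw [if_neg (by omega)]
  | succ α ih =>
    obtain ⟨hc, h0⟩ := ih
    set q := qPoly α with hq
    have hnd : q.natDegree ≤ α := natDegree_le_iff_coeff_eq_zero.mpr h0
    set r := q.comp (X - 1) with hrdef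
    have hrc : ∀ k, α ≤ k + 1 → r.coeff k = q.coeff k - (k + 1) * q.coeff (k + 1) := by
      intro k hk
      rw [hrdef, comp_eq_taylor, coeff_taylor_neg_one q k (le_trans hnd hk)]
    have heq : qPoly (α + 1) = q * X ^ 2 * 4 + q * X ^ 1 * 4 + q - r * X ^ 2 * 4 := by
      show (2 * X + 1) ^ 2 * q - 4 * X ^ 2 * r = _
      ring
    have hco2 : ∀ k, (qPoly (α + 1)).coeff (k + 2) =
        4 * q.coeff k + 4 * q.coeff (k + 1) + q.coeff (k + 2) - 4 * r.coeff k := by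
      intro k
      rw [heq]
      have h4 : (4 : Polynomial ℚ) = C 4 := (map_ofNat C 4).symm
      rw [h4]
      simp only [coeff_add, coeff_sub, coeff_mul_C]
      rw [show k + 2 = k + 1 + 1 from rfl, coeff_mul_X_pow q 2 k,
        coeff_mul_X_pow r 2 k, coeff_mul_X_pow q 1 (k + 1)]
      ring
    constructor
    · rcases α with _ | β
      · have h1 : qPoly 1 = 4 * X + 1 := by
          show (2 * X + 1) ^ 2 * qPoly 0 - 4 * X ^ 2 * (qPoly 0).comp (X - 1) = _
          simp only [qPoly, one_comp]
          ring
        rw [h1]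
        simp [coeff_add, coeff_one]
        norm_num
      · have hk := hco2 β
        rw [show β + 1 + 1 = β + 2 from rfl] at *
        rw [hk, hrc β (by omega), h0 (β + 2) (by omega), hc]
        rw [show (β + 2).factorial = (β + 2) * (β + 1).factorial from rfl]
        push_cast
        ring
    · intro m hm
      obtain ⟨k, rfl⟩ : ∃ k, m = k + 2 := ⟨m - 2, by omega⟩
      have hk : α ≤ k := by omega
      rw [hco2 k, hrc k (by omega), h0 (k + 1) (by omega), h0 (k + 2) (by omega)]
      rcases eq_or_lt_of_le hk with h | h
      · subst h; ring
      · rw [h0 k h]; ring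

/-- Each `q_α` has degree exactly `α` and leading coefficient `α!·2^{2α}`. -/
theorem stmt_6 (α : ℕ) :
    (qPoly α).degree = (α : WithBot ℕ) ∧
    (qPoly α).leadingCoeff = (α.factorial : ℚ) * 2 ^ (2 * α) := by
  obtain ⟨hc, h0⟩ := qPoly_aux α
  have hne : (qPoly α).coeff α ≠ 0 := by
    rw [hc]; positivity
  have hdeg : (qPoly α).degree = (α : WithBot ℕ) := by
    apply le_antisymm
    · exact degree_le_iff_coeff_zero _ _ |>.mpr fun m hm => h0 m (by exact_mod_cast hm)
    · exact le_degree_of_ne_zero hne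
  refine ⟨hdeg, ?_⟩
  rw [leadingCoeff, natDegree_eq_of_degree_eq_some hdeg, hc]
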